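/- arXiv:2501.14843 — 3 statements merged into one kernel-verified Lean document; each statement's English description precedes it below -/
import Mathlib

section
/- Fix T > 0, let (E, ℰ) be a measurable space with a σ-finite measure λ, and let λ_T be the product of Lebesgue measure on [0,T] with λ. Let G : [0,T] × E → [0,∞) be measurable with ∫_{[0,T]×E} G² dλ_T < ∞, and suppose there exists δ > 0 such that ∫_X exp(δ G²) dλ_T < ∞ for every measurable X ⊆ [0,T] × E with λ_T(X) < ∞. Then for every Υ > 0, sup_{ρ ∈ S̃^Υ} ∫_{[0,T]×E} G(s,ξ) |ρ(s,ξ) − 1| dλ_T(s,ξ) < ∞. -/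
open MeasureTheory

lemma ent_ge_sqrt (b : ℝ) (hb : 0 ≤ b) :
    (Real.sqrt b - 1) ^ 2 ≤ b * Real.log b - b + 1 := by
  rcases eq_or_lt_of_le hb with h | h
  · simp [← h]
  · have ht : 0 < Real.sqrt b := Real.sqrt_pos.2 h
    have hlog : 1 - (Real.sqrt b)⁻¹ ≤ Real.log (Real.sqrt b) := by
      have := Real.log_le_sub_one_of_pos (inv_pos.2 ht)
      rw [Real.log_inv] at this; linarith
    have hsq : Real.sqrt b ^ 2 = b := Real.sq_sqrt hb
    have hls : Real.log b = 2 * Real.log (Real.sqrt b) := by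
      rw [Real.log_sqrt hb]; ring
    have hinv : Real.sqrt b ^ 2 * (Real.sqrt b)⁻¹ = Real.sqrt b := by
      rw [sq, mul_assoc, mul_inv_cancel₀ ht.ne', mul_one]
    have h2 : Real.sqrt b ^ 2 - Real.sqrt b ≤ Real.sqrt b ^ 2 * Real.log (Real.sqrt b) := by
      have := mul_le_mul_of_nonneg_left hlog (sq_nonneg (Real.sqrt b))
      rw [mul_sub, mul_one, hinv] at this
      linarith
    have hbl : b * Real.log b = 2 * (Real.sqrt b ^ 2 * Real.log (Real.sqrt b)) := by
      rw [hsq, hls]; ring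
    nlinarith

lemma ent_nonneg (b : ℝ) (hb : 0 ≤ b) : 0 ≤ b * Real.log b - b + 1 :=
  le_trans (sq_nonneg _) (ent_ge_sqrt b hb)

lemma small_ineq (a b : ℝ) (ha0 : 0 ≤ a) (ha1 : a ≤ 1) (hb : 0 ≤ b) :
    a * |b - 1| ≤ 2 * a ^ 2 + 2 * (b * Real.log b - b + 1) := by
  have h := ent_ge_sqrt b hb
  set t := Real.sqrt b with hts
  have ht0 : 0 ≤ t := Real.sqrt_nonneg b
  have ht2 : t ^ 2 = b := Real.sq_sqrt hb
  have key : a * |b - 1| ≤ 2 * a ^ 2 + 2 * (t - 1) ^ 2 := by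
    rcases abs_cases (b - 1) with ⟨he, hge⟩ | ⟨he, hlt⟩
    · rw [he]
      rcases le_or_gt t 3 with hc | hc
      · nlinarith [sq_nonneg (a - (t - 1)), sq_nonneg (t - 1)]
      · nlinarith [sq_nonneg (t - 1)]
    · rw [he]
      nlinarith [sq_nonneg (a - (1 - t)), sq_nonneg (1 - t)]
  nlinarith

lemma dual_ineq (x b : ℝ) (hb : 0 ≤ b) :
    x * b ≤ Real.exp x + (b * Real.log b - b + 1) := by
  rcases eq_or_lt_of_le hb with h | h
  · rw [← h]; simp; positivity
  · have h1 : (x - Real.log b) + 1 ≤ Real.exp (x - Real.log b) := Real.add_one_le_exp _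
    have h2 : b * Real.exp (x - Real.log b) = Real.exp x := by
      rw [Real.exp_sub, Real.exp_log h]; field_simp
    nlinarith [mul_le_mul_of_nonneg_left h1 h.le]

/-- (Finiteness of the constant `C^Υ_{i,1}` in Lemma 6.7(i).)
Let `λ` be σ-finite on `E`, `λ_T = (Lebesgue on [0,T]) ⊗ λ`, and let `G ≥ 0` be
measurable, square integrable w.r.t. `λ_T`, and exponentially square integrable on
sets of finite `λ_T`-measure.  Then for every `Υ > 0`,
`sup_{ρ ∈ S̃^Υ} ∫ G |ρ − 1| dλ_T < ∞`, where `S̃^Υ` is the set of measurable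
`ρ ≥ 0` with `∫ (ρ log ρ − ρ + 1) dλ_T ≤ Υ`. -/
theorem sup_integral_G_abs_rho_sub_one_lt_top
    {E : Type*} [MeasurableSpace E] (lam : Measure E) [SigmaFinite lam]
    (T : ℝ) (hT : 0 < T)
    (lamT : Measure (ℝ × E))
    (hlamT : lamT = (volume.restrict (Set.Icc (0:ℝ) T)).prod lam)
    (G : ℝ × E → ℝ) (hGmeas : Measurable G) (hGpos : ∀ p, 0 ≤ G p)
    (hGsq : Integrable (fun p => G p ^ 2) lamT)
    (δ : ℝ) (hδ : 0 < δ)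
    (hexp : ∀ X : Set (ℝ × E), MeasurableSet X → lamT X < ⊤ →
      IntegrableOn (fun p => Real.exp (δ * G p ^ 2)) X lamT)
    (Υ : ℝ) (hΥ : 0 < Υ) :
    ∃ C : ℝ, ∀ ρ : ℝ × E → ℝ, Measurable ρ → (∀ p, 0 ≤ ρ p) →
      (∫⁻ p, ENNReal.ofReal (ρ p * Real.log (ρ p) - ρ p + 1) ∂lamT
        ≤ ENNReal.ofReal Υ) →
      ∫⁻ p, ENNReal.ofReal (G p * |ρ p - 1|) ∂lamT ≤ ENNReal.ofReal C := by
  classical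
  set A : Set (ℝ × E) := {p | 1 ≤ G p} with hAdef
  have hA : MeasurableSet A := measurableSet_le measurable_const hGmeas
  have hGsq0 : ∀ p, (0:ℝ) ≤ G p ^ 2 := fun p => sq_nonneg _
  -- Chebyshev: lamT A < ⊤
  have hchb : lamT A < ⊤ := by
    have h1 : lamT A = ∫⁻ _ in A, 1 ∂lamT := (setLIntegral_one A).symm
    have h2 : ∫⁻ _ in A, (1:ENNReal) ∂lamT ≤ ∫⁻ p in A, ENNReal.ofReal (G p ^ 2) ∂lamT := by
      refine setLIntegral_mono (hGmeas.pow_const 2).ennreal_ofReal (fun p hp => ?_)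
      have h1G : (1:ℝ) ≤ G p := hp
      have : (1:ℝ) ≤ G p ^ 2 := by nlinarith
      simpa using ENNReal.ofReal_le_ofReal this
    have h3 : ∫⁻ p in A, ENNReal.ofReal (G p ^ 2) ∂lamT
        ≤ ∫⁻ p, ENNReal.ofReal (G p ^ 2) ∂lamT := setLIntegral_le_lintegral A _
    have h4 : ∫⁻ p, ENNReal.ofReal (G p ^ 2) ∂lamT < ⊤ := by
      rw [← ofReal_integral_eq_lintegral_ofReal hGsq (ae_of_all _ hGsq0)]
      exact ENNReal.ofReal_lt_top
    rw [h1]; exact lt_of_le_of_lt (le_trans h2 h3) h4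
  set g : ℝ × E → ℝ := fun p => Real.exp (δ * G p ^ 2) / δ + G p ^ 2 with hgdef
  have hg0 : ∀ p, 0 ≤ g p := fun p => by
    have := Real.exp_pos (δ * G p ^ 2); have := sq_nonneg (G p); positivity
  have hgm : Measurable g :=
    ((Real.measurable_exp.comp (measurable_const.mul (hGmeas.pow_const 2))).div_const δ).add
      (hGmeas.pow_const 2)
  have hgint : IntegrableOn g A lamT :=
    ((hexp A hA hchb).div_const δ).add hGsq.integrableOn
  have hc0 : (0:ℝ) ≤ 2 + 1/δ := by positivity
  refine ⟨(∫ p in A, g p ∂lamT) + (∫ p, 2 * G p ^ 2 ∂lamT) + (2 + 1/δ) * Υ,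
    fun ρ hρm hρ0 hρent => ?_⟩
  set ℓ : ℝ × E → ℝ := fun p => ρ p * Real.log (ρ p) - ρ p + 1 with hℓdef
  have hℓ0 : ∀ p, 0 ≤ ℓ p := fun p => ent_nonneg _ (hρ0 p)
  have hℓm : Measurable ℓ :=
    ((hρm.mul (Real.measurable_log.comp hρm)).sub hρm).add measurable_const
  clear_value ℓ
  have hρent' : ∫⁻ p, ENNReal.ofReal (ℓ p) ∂lamT ≤ ENNReal.ofReal Υ := by
    rw [hℓdef]; exact hρent
  -- pointwise inequality
  have key : ∀ p, G p * |ρ p - 1| ≤ A.indicator g p + 2 * G p ^ 2 + (2 + 1/δ) * ℓ p := by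
    intro p
    by_cases hp : p ∈ A
    · rw [Set.indicator_of_mem hp g]
      have h1G : (1:ℝ) ≤ G p := hp
      have habs : |ρ p - 1| ≤ ρ p + 1 := by
        rcases abs_cases (ρ p - 1) with ⟨he, _⟩ | ⟨he, _⟩ <;> rw [he] <;>
          [linarith; linarith [hρ0 p]]
      have hmul : G p * |ρ p - 1| ≤ G p * (ρ p + 1) :=
        mul_le_mul_of_nonneg_left habs (hGpos p)
      have hd : δ * G p * ρ p ≤ Real.exp (δ * G p) + ℓ p := by
        rw [hℓdef]; exact dual_ineq (δ * G p) (ρ p) (hρ0 p)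
      have hGρ : G p * ρ p ≤ Real.exp (δ * G p ^ 2) / δ + (1/δ) * ℓ p := by
        have hee : Real.exp (δ * G p) ≤ Real.exp (δ * G p ^ 2) := by
          apply Real.exp_le_exp.2
          have : G p ≤ G p ^ 2 := by nlinarith
          nlinarith
        calc G p * ρ p = (δ * G p * ρ p) / δ := by field_simp
          _ ≤ (Real.exp (δ * G p) + ℓ p) / δ := by gcongr
          _ = Real.exp (δ * G p) / δ + (1/δ) * ℓ p := by ring
          _ ≤ Real.exp (δ * G p ^ 2) / δ + (1/δ) * ℓ p := by gcongr
      have hGG : G p ≤ G p ^ 2 := by nlinarith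
      have hnn : 0 ≤ 2 * ℓ p := by linarith [hℓ0 p]
      have hexpand : (2 + 1/δ) * ℓ p = (1/δ) * ℓ p + 2 * ℓ p := by ring
      have hfin : G p * (ρ p + 1) = G p * ρ p + G p := by ring
      have : G p * |ρ p - 1| ≤ Real.exp (δ * G p ^ 2) / δ + (1/δ) * ℓ p + G p ^ 2 := by
        rw [hfin] at hmul; linarith
      show G p * |ρ p - 1| ≤ (Real.exp (δ * G p ^ 2) / δ + G p ^ 2) + 2 * G p ^ 2 + (2 + 1/δ) * ℓ p
      rw [hexpand]
      nlinarith [sq_nonneg (G p)]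
    · rw [Set.indicator_of_notMem hp]
      have h1G : G p ≤ 1 := le_of_not_ge hp
      have hs : G p * |ρ p - 1| ≤ 2 * G p ^ 2 + 2 * ℓ p := by
        rw [hℓdef]; exact small_ineq (G p) (ρ p) (hGpos p) h1G (hρ0 p)
      have hnn : 0 ≤ (1/δ) * ℓ p := mul_nonneg (by positivity) (hℓ0 p)
      have hexpand : (2 + 1/δ) * ℓ p = 2 * ℓ p + (1/δ) * ℓ p := by ring
      linarith
  -- integrate
  calc ∫⁻ p, ENNReal.ofReal (G p * |ρ p - 1|) ∂lamT
      ≤ ∫⁻ p, ENNReal.ofReal (A.indicator g p + 2 * G p ^ 2 + (2 + 1/δ) * ℓ p) ∂lamT :=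
        lintegral_mono fun p => ENNReal.ofReal_le_ofReal (key p)
    _ = ∫⁻ p, (ENNReal.ofReal (A.indicator g p) + ENNReal.ofReal (2 * G p ^ 2)
          + ENNReal.ofReal ((2 + 1/δ) * ℓ p)) ∂lamT := by
        congr 1; funext p
        have hi0 : 0 ≤ A.indicator g p := Set.indicator_nonneg (fun q _ => hg0 q) p
        have h20 : (0:ℝ) ≤ 2 * G p ^ 2 := by positivity
        rw [ENNReal.ofReal_add (by linarith) (mul_nonneg hc0 (hℓ0 p)),
          ENNReal.ofReal_add hi0 h20]
    _ = (∫⁻ p, ENNReal.ofReal (A.indicator g p) ∂lamT)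
          + (∫⁻ p, ENNReal.ofReal (2 * G p ^ 2) ∂lamT)
          + (∫⁻ p, ENNReal.ofReal ((2 + 1/δ) * ℓ p) ∂lamT) := by
        rw [lintegral_add_right _ (hℓm.const_mul _).ennreal_ofReal,
          lintegral_add_right _ ((hGmeas.pow_const 2).const_mul 2).ennreal_ofReal]
    _ ≤ ENNReal.ofReal (∫ p in A, g p ∂lamT) + ENNReal.ofReal (∫ p, 2 * G p ^ 2 ∂lamT)
          + ENNReal.ofReal ((2 + 1/δ) * Υ) := by
        gcongr ?_ + ?_ + ?_
        · refine le_of_eq ?_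
          have hrw : ∀ p, ENNReal.ofReal (A.indicator g p)
              = A.indicator (fun q => ENNReal.ofReal (g q)) p := by
            intro p; by_cases hp : p ∈ A <;> simp [hp]
          calc ∫⁻ p, ENNReal.ofReal (A.indicator g p) ∂lamT
              = ∫⁻ p, A.indicator (fun q => ENNReal.ofReal (g q)) p ∂lamT := by
                simp_rw [hrw]
            _ = ∫⁻ p in A, ENNReal.ofReal (g p) ∂lamT := lintegral_indicator hA _
            _ = ENNReal.ofReal (∫ p in A, g p ∂lamT) :=
                (ofReal_integral_eq_lintegral_ofReal hgint (ae_of_all _ hg0)).symm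
        · rw [← ofReal_integral_eq_lintegral_ofReal (hGsq.const_mul 2)
            (ae_of_all _ (fun p => by positivity))]
        · calc ∫⁻ p, ENNReal.ofReal ((2 + 1/δ) * ℓ p) ∂lamT
              = ∫⁻ p, ENNReal.ofReal (2 + 1/δ) * ENNReal.ofReal (ℓ p) ∂lamT := by
                simp_rw [ENNReal.ofReal_mul hc0]
            _ = ENNReal.ofReal (2 + 1/δ) * ∫⁻ p, ENNReal.ofReal (ℓ p) ∂lamT :=
                lintegral_const_mul _ hℓm.ennreal_ofReal
            _ ≤ ENNReal.ofReal (2 + 1/δ) * ENNReal.ofReal Υ := mul_le_mul_right hρent' _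
            _ = ENNReal.ofReal ((2 + 1/δ) * Υ) := (ENNReal.ofReal_mul hc0).symm
    _ ≤ ENNReal.ofReal ((∫ p in A, g p ∂lamT) + (∫ p, 2 * G p ^ 2 ∂lamT) + (2 + 1/δ) * Υ) := by
        have hI1 : 0 ≤ ∫ p in A, g p ∂lamT :=
          setIntegral_nonneg hA (fun p _ => hg0 p)
        have hI2 : 0 ≤ ∫ p, 2 * G p ^ 2 ∂lamT :=
          integral_nonneg (fun p => by positivity)
        rw [ENNReal.ofReal_add (by linarith) (mul_nonneg hc0 hΥ.le), ENNReal.ofReal_add hI1 hI2]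
end

section
/- Fix T > 0, let (E, ℰ) be a measurable space with a σ-finite measure λ, and let λ_T be the product of Lebesgue measure on [0,T] with λ. Let G : [0,T] × E → [0,∞) be measurable with ∫_{[0,T]×E} G² dλ_T < ∞, and suppose there exists δ > 0 such that ∫_X exp(δ G²) dλ_T < ∞ for every measurable X ⊆ [0,T] × E with λ_T(X) < ∞. Then for every Υ > 0, sup_{ρ ∈ S̃^Υ} ∫_{[0,T]×E} G(s,ξ)² (ρ(s,ξ) + 1) dλ_T(s,ξ) < ∞. -/
open MeasureTheory

lemma young_aux (u v : ℝ) (hv : 0 ≤ v) :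
    u * v ≤ (Real.exp u - 1) + (v * Real.log v - v + 1) := by
  rcases hv.eq_or_lt with h | h
  · rw [← h]
    simp
    positivity
  · have h1 : (u - Real.log v) + 1 ≤ Real.exp (u - Real.log v) :=
      Real.add_one_le_exp _
    have h2 : v * ((u - Real.log v) + 1) ≤ v * Real.exp (u - Real.log v) :=
      mul_le_mul_of_nonneg_left h1 hv
    have h3 : v * Real.exp (u - Real.log v) = Real.exp u := by
      rw [Real.exp_sub, Real.exp_log h]
      field_simp
    nlinarith [Real.exp_pos u]

lemma l_nonneg (v : ℝ) (hv : 0 ≤ v) : 0 ≤ v * Real.log v - v + 1 := by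
  rcases hv.eq_or_lt with h | h
  · simp [← h]
  · have := Real.log_le_sub_one_of_pos (show (0:ℝ) < 1/v by positivity)
    rw [Real.log_div one_ne_zero h.ne', Real.log_one] at this
    have h2 : v * (1 - 1/v) ≤ v * Real.log v := by nlinarith
    have : v * (1 - 1/v) = v - 1 := by field_simp
    nlinarith

lemma exp_sub_one_le (x : ℝ) : Real.exp x - 1 ≤ x * Real.exp x := by
  have h := Real.add_one_le_exp (-x)
  have h2 : Real.exp (-x) * Real.exp x = 1 := by
    rw [← Real.exp_add]; simp
  nlinarith [Real.exp_pos x]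

/-- (Finiteness of the constant `C^Υ_{i,2}` in Lemma 6.7(i).)
Let `λ` be σ-finite on `E`, `λ_T = (Lebesgue on [0,T]) ⊗ λ`, and let `G ≥ 0` be
measurable, square integrable w.r.t. `λ_T`, and exponentially square integrable on
sets of finite `λ_T`-measure.  Then for every `Υ > 0`,
`sup_{ρ ∈ S̃^Υ} ∫ G² (ρ + 1) dλ_T < ∞`, where `S̃^Υ` is the set of measurable
`ρ ≥ 0` with `∫ (ρ log ρ − ρ + 1) dλ_T ≤ Υ`. -/
theorem sup_integral_G_sq_rho_add_one_lt_top
    {E : Type*} [MeasurableSpace E] (lam : Measure E) [SigmaFinite lam]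
    (T : ℝ) (hT : 0 < T)
    (lamT : Measure (ℝ × E))
    (hlamT : lamT = (volume.restrict (Set.Icc (0:ℝ) T)).prod lam)
    (G : ℝ × E → ℝ) (hGmeas : Measurable G) (hGpos : ∀ p, 0 ≤ G p)
    (hGsq : Integrable (fun p => G p ^ 2) lamT)
    (δ : ℝ) (hδ : 0 < δ)
    (hexp : ∀ X : Set (ℝ × E), MeasurableSet X → lamT X < ⊤ →
      IntegrableOn (fun p => Real.exp (δ * G p ^ 2)) X lamT)
    (Υ : ℝ) (hΥ : 0 < Υ) :
    ∃ C : ℝ, ∀ ρ : ℝ × E → ℝ, Measurable ρ → (∀ p, 0 ≤ ρ p) →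
      (∫⁻ p, ENNReal.ofReal (ρ p * Real.log (ρ p) - ρ p + 1) ∂lamT
        ≤ ENNReal.ofReal Υ) →
      ∫⁻ p, ENNReal.ofReal (G p ^ 2 * (ρ p + 1)) ∂lamT ≤ ENNReal.ofReal C := by
  -- the function `h = exp (δ G²) - 1`
  set h : ℝ × E → ℝ := fun p => Real.exp (δ * G p ^ 2) - 1 with hh
  have hmeas : Measurable h := by
    apply Measurable.sub _ measurable_const
    exact Real.measurable_exp.comp ((hGmeas.pow_const 2).const_mul δ)
  have hnonneg : ∀ p, 0 ≤ h p := by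
    intro p
    have : (0:ℝ) ≤ δ * G p ^ 2 := by positivity
    have := Real.one_le_exp this
    simp [hh]; linarith
  -- the set where `G > 1` has finite measure
  set S : Set (ℝ × E) := {p | 1 < G p} with hS
  have hSmeas : MeasurableSet S := measurableSet_lt measurable_const hGmeas
  have hSfin : lamT S < ⊤ := by
    have hle : lamT S ≤ ∫⁻ p, ENNReal.ofReal (G p ^ 2) ∂lamT := by
      calc lamT S = ∫⁻ p in S, 1 ∂lamT := by simp
        _ ≤ ∫⁻ p in S, ENNReal.ofReal (G p ^ 2) ∂lamT := by
            apply setLIntegral_mono (hGmeas.pow_const 2).ennreal_ofReal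
            intro p hp
            have h1 : (1:ℝ) < G p := hp
            have : (1:ℝ) ≤ G p ^ 2 := by nlinarith
            simpa using ENNReal.ofReal_le_ofReal this
        _ ≤ ∫⁻ p, ENNReal.ofReal (G p ^ 2) ∂lamT := setLIntegral_le_lintegral _ _
    refine hle.trans_lt ?_
    have := hGsq.hasFiniteIntegral
    rw [hasFiniteIntegral_iff_ofReal] at this
    · exact this
    · filter_upwards with p using by positivity
  -- integrability of h
  have hInt : Integrable h lamT := by
    rw [← integrableOn_univ, ← Set.union_compl_self S]
    apply IntegrableOn.union
    · exact (hexp S hSmeas hSfin).sub (integrableOn_const hSfin.ne)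
    · -- on Sᶜ, G ≤ 1, so h ≤ δ e^δ G²
      apply Integrable.mono ((hGsq.const_mul (δ * Real.exp δ)).integrableOn)
        (hmeas.aestronglyMeasurable.restrict)
      rw [ae_restrict_iff' hSmeas.compl]
      filter_upwards with p hp
      have hG1 : G p ≤ 1 := by simpa [hS] using hp
      have hsq : G p ^ 2 ≤ 1 := by nlinarith [hGpos p]
      have hG2 : δ * G p ^ 2 ≤ δ := by nlinarith
      have hb := exp_sub_one_le (δ * G p ^ 2)
      have hexpmono : Real.exp (δ * G p ^ 2) ≤ Real.exp δ := Real.exp_le_exp.2 hG2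
      rw [Real.norm_eq_abs, Real.norm_eq_abs, abs_of_nonneg (hnonneg p)]
      have : h p ≤ δ * G p ^ 2 * Real.exp δ := by
        have : δ * G p ^ 2 * Real.exp (δ * G p ^ 2) ≤ δ * G p ^ 2 * Real.exp δ :=
          mul_le_mul_of_nonneg_left hexpmono (by positivity)
        simp only [hh]; linarith
      calc h p ≤ δ * G p ^ 2 * Real.exp δ := this
        _ ≤ |δ * Real.exp δ * G p ^ 2| := by
            rw [abs_of_nonneg (by positivity)]; exact le_of_eq (by ring)
  -- the constant
  refine ⟨(1/δ) * ∫ p, h p ∂lamT + (1/δ) * Υ + ∫ p, G p ^ 2 ∂lamT, ?_⟩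
  intro ρ hρmeas hρpos hρent
  have hIh : (0:ℝ) ≤ ∫ p, h p ∂lamT := integral_nonneg hnonneg
  have hIG : (0:ℝ) ≤ ∫ p, G p ^ 2 ∂lamT := integral_nonneg (fun p => by positivity)
  -- pointwise inequality
  have key : ∀ p, G p ^ 2 * (ρ p + 1)
      ≤ (1/δ) * h p + (1/δ) * (ρ p * Real.log (ρ p) - ρ p + 1) + G p ^ 2 := by
    intro p
    have hy := young_aux (δ * G p ^ 2) (ρ p) (hρpos p)
    have hkey : δ * (G p ^ 2 * ρ p) ≤ h p + (ρ p * Real.log (ρ p) - ρ p + 1) := by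
      simp only [hh]; nlinarith
    have h2 : G p ^ 2 * ρ p ≤ (1/δ) * (h p + (ρ p * Real.log (ρ p) - ρ p + 1)) := by
      rw [div_mul_eq_mul_div, le_div_iff₀ hδ, one_mul]
      nlinarith
    nlinarith
  -- main estimate
  calc ∫⁻ p, ENNReal.ofReal (G p ^ 2 * (ρ p + 1)) ∂lamT
      ≤ ∫⁻ p, (ENNReal.ofReal ((1/δ) * h p)
          + ENNReal.ofReal (1/δ) * ENNReal.ofReal (ρ p * Real.log (ρ p) - ρ p + 1)
          + ENNReal.ofReal (G p ^ 2)) ∂lamT := by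
        apply lintegral_mono
        intro p
        have hle := ENNReal.ofReal_le_ofReal (key p)
        refine hle.trans (le_of_eq ?_)
        show ENNReal.ofReal _ = ENNReal.ofReal (1/δ * h p)
          + ENNReal.ofReal (1/δ) * ENNReal.ofReal (ρ p * Real.log (ρ p) - ρ p + 1)
          + ENNReal.ofReal (G p ^ 2)
        have e1 : (0:ℝ) ≤ 1/δ * h p := mul_nonneg (by positivity) (hnonneg p)
        have e2 : (0:ℝ) ≤ ρ p * Real.log (ρ p) - ρ p + 1 := l_nonneg _ (hρpos p)
        rw [ENNReal.ofReal_add (add_nonneg e1 (mul_nonneg (by positivity) e2))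
            (by positivity),
          ENNReal.ofReal_add e1 (mul_nonneg (by positivity) e2),
          ENNReal.ofReal_mul (by positivity : (0:ℝ) ≤ 1/δ),
          ENNReal.ofReal_mul (by positivity : (0:ℝ) ≤ 1/δ)]
    _ = (∫⁻ p, ENNReal.ofReal ((1/δ) * h p) ∂lamT)
        + ENNReal.ofReal (1/δ) * (∫⁻ p, ENNReal.ofReal (ρ p * Real.log (ρ p) - ρ p + 1) ∂lamT)
        + ∫⁻ p, ENNReal.ofReal (G p ^ 2) ∂lamT := by
        rw [lintegral_add_right _ (hGmeas.pow_const 2).ennreal_ofReal,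
          lintegral_add_left ((hmeas.const_mul _).ennreal_ofReal),
          lintegral_const_mul _ ?_]
        · apply Measurable.ennreal_ofReal
          exact ((hρmeas.mul (Real.measurable_log.comp hρmeas)).sub hρmeas).add measurable_const
    _ ≤ ENNReal.ofReal ((1/δ) * ∫ p, h p ∂lamT)
        + ENNReal.ofReal ((1/δ) * Υ)
        + ENNReal.ofReal (∫ p, G p ^ 2 ∂lamT) := by
        gcongr
        · rw [← ofReal_integral_eq_lintegral_ofReal (hInt.const_mul _)
            (Filter.Eventually.of_forall fun p =>
              mul_nonneg (by positivity) (hnonneg p))]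
          rw [integral_const_mul]
        · rw [ENNReal.ofReal_mul (by positivity : (0:ℝ) ≤ 1/δ)]
          exact mul_le_mul_right hρent _
        · rw [← ofReal_integral_eq_lintegral_ofReal hGsq
            (Filter.Eventually.of_forall fun p => by positivity)]
    _ ≤ ENNReal.ofReal ((1/δ) * ∫ p, h p ∂lamT + (1/δ) * Υ + ∫ p, G p ^ 2 ∂lamT) := by
        rw [ENNReal.ofReal_add (by positivity) hIG,
          ENNReal.ofReal_add (by positivity) (by positivity)]
end

section
/- Fix T > 0, Υ > 0. Let E be a locally compact Polish space with its Borel σ-algebra, λ a σ-finite Borel measure on E which is finite on compact sets, and λ_T the product of Lebesgue measure on [0,T] with λ. Let d : [0,T] × E → ℝ be measurable with ∫_{[0,T]×E} |d|² dλ_T < ∞ and such that for every δ₃ > 0 and every measurable X ⊆ [0,T] × E with λ_T(X) < ∞, ∫_X exp(δ₃|d|) dλ_T < ∞. Then for every ε > 0 there exists a compact set K_ε ⊆ E such that sup_{ρ ∈ S̃^Υ} ∫₀ᵀ ∫_{E∖K_ε} |d(s,ξ)| |ρ(s,ξ) − 1| λ(dξ) ds ≤ ε. -/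
open MeasureTheory


/-- `e^U - e^{-U} ≥ 2U` for `U ≥ 0`. -/
lemma two_mul_le_exp_sub {U : ℝ} (hU : 0 ≤ U) :
    2 * U ≤ Real.exp U - Real.exp (-U) := by
  have hA : 1 + U + U ^ 2 / 2 ≤ Real.exp U := Real.quadratic_le_exp_of_nonneg hU
  have hApos : 0 < Real.exp U := Real.exp_pos U
  have hinv : Real.exp (-U) * Real.exp U = 1 := by
    rw [← Real.exp_add]; ring_nf; exact Real.exp_zero
  nlinarith [sq_nonneg (U ^ 2), sq_nonneg U, Real.exp_pos (-U),
    mul_le_mul hA (by linarith : 1 - U + U ^ 2 / 2 ≤ Real.exp U - 2 * U)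
      (by nlinarith [sq_nonneg (U - 1)]) hApos.le]

/-- `w * e^(w+1) ≥ -1` for all real `w`. -/
lemma neg_one_le_mul_exp (w : ℝ) : -1 ≤ w * Real.exp (w + 1) := by
  have h := Real.add_one_le_exp (-(w + 1))
  have hpos : 0 < Real.exp (w + 1) := Real.exp_pos _
  have hm : Real.exp (-(w + 1)) * Real.exp (w + 1) = 1 := by
    rw [← Real.exp_add]; ring_nf; exact Real.exp_zero
  nlinarith [mul_le_mul_of_nonneg_right h hpos.le]

/-- Key entropy duality inequality: `U |V - 1| ≤ ℓ(V) + e^U - 1 - U`. -/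
lemma key_ineq (U V : ℝ) (hU : 0 ≤ U) (hV : 0 ≤ V) :
    U * |V - 1| ≤ (V * Real.log V - V + 1) + (Real.exp U - 1 - U) := by
  rcases le_or_gt 1 V with h1 | h1
  · rw [abs_of_nonneg (by linarith)]
    have hVpos : 0 < V := lt_of_lt_of_le one_pos h1
    have hexp : Real.exp U = V * Real.exp (U - Real.log V) := by
      rw [Real.exp_sub, Real.exp_log hVpos]
      field_simp
    have h2 : U - Real.log V + 1 ≤ Real.exp (U - Real.log V) := Real.add_one_le_exp _
    nlinarith [mul_le_mul_of_nonneg_left h2 hV]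
  · rw [abs_of_nonpos (by linarith)]
    have h2U := two_mul_le_exp_sub hU
    rcases eq_or_lt_of_le hV with hV0 | hVpos
    · rw [← hV0]
      simp only [Real.log_zero]
      nlinarith [Real.exp_pos (-U)]
    · set w : ℝ := Real.log V - 1 + U with hw
      have hVw : V * w = w * Real.exp (w + 1) * Real.exp (-U) := by
        have : Real.exp (w + 1) * Real.exp (-U) = V := by
          rw [← Real.exp_add, show w + 1 + -U = Real.log V by rw [hw]; ring,
            Real.exp_log hVpos]
        rw [mul_assoc, this]; ring
      have hb : -1 ≤ w * Real.exp (w + 1) := neg_one_le_mul_exp w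
      have hVw2 : -Real.exp (-U) ≤ V * w := by
        rw [hVw]
        have := mul_le_mul_of_nonneg_right hb (Real.exp_pos (-U)).le
        linarith
      have hexpand : V * w = V * Real.log V - V + U * V := by rw [hw]; ring
      nlinarith

/-- `e^x - 1 - x ≤ x² e^x` for `x ≥ 0`. -/
lemma exp_sub_one_sub_le {x : ℝ} (hx : 0 ≤ x) :
    Real.exp x - 1 - x ≤ x ^ 2 * Real.exp x := by
  have h1 : -x + 1 ≤ Real.exp (-x) := Real.add_one_le_exp (-x)
  have hpos : 0 < Real.exp x := Real.exp_pos x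
  have hm : Real.exp (-x) * Real.exp x = 1 := by rw [← Real.exp_add]; ring_nf; exact Real.exp_zero
  have h2 : Real.exp x - 1 ≤ x * Real.exp x := by
    nlinarith [mul_le_mul_of_nonneg_right h1 hpos.le]
  nlinarith [mul_le_mul_of_nonneg_left h2 hx]

lemma tail_small {E : Type*} [TopologicalSpace E] [PolishSpace E] [LocallyCompactSpace E]
    [MeasurableSpace E] [BorelSpace E]
    (μ : Measure (ℝ × E)) (g : ℝ × E → ℝ) (hg : Integrable g μ) {η : ℝ} (hη : 0 < η) :
    ∃ K : Set E, IsCompact K ∧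
      ∫⁻ p in (Set.univ : Set ℝ) ×ˢ Kᶜ, ENNReal.ofReal (g p) ∂μ ≤ ENNReal.ofReal η := by
  set ν := μ.withDensity (fun p => ENNReal.ofReal (g p)) with hν
  have hνfin : ν Set.univ ≠ ⊤ := by
    rw [hν, withDensity_apply _ MeasurableSet.univ, Measure.restrict_univ]
    exact hg.lintegral_lt_top.ne
  set s : ℕ → Set (ℝ × E) := fun n => (Set.univ : Set ℝ) ×ˢ (compactCovering E n)ᶜ with hs
  have hs_meas : ∀ n, MeasurableSet (s n) := fun n =>
    MeasurableSet.univ.prod (isCompact_compactCovering E n).isClosed.measurableSet.compl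
  have hanti : Antitone s := fun m n hmn =>
    Set.prod_mono le_rfl (Set.compl_subset_compl.2 (compactCovering_subset E hmn))
  have hiInter : ⋂ n, s n = ∅ := by
    ext p
    simp only [hs, Set.mem_iInter, Set.mem_prod, Set.mem_univ, true_and, Set.mem_compl_iff,
      Set.mem_empty_iff_false, iff_false, not_forall, not_not]
    have hp : p.2 ∈ ⋃ n, compactCovering E n := by
      rw [iUnion_compactCovering]; trivial
    exact Set.mem_iUnion.1 hp
  have htend : Filter.Tendsto (fun n => ν (s n)) Filter.atTop (nhds 0) := by
    have h := tendsto_measure_iInter_atTop (μ := ν)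
      (fun n => (hs_meas n).nullMeasurableSet) hanti
      ⟨0, ((measure_mono (Set.subset_univ _)).trans_lt hνfin.lt_top).ne⟩
    rw [hiInter, measure_empty] at h
    exact h
  obtain ⟨n, hn⟩ := (htend.eventually (gt_mem_nhds (ENNReal.ofReal_pos.2 hη))).exists
  refine ⟨compactCovering E n, isCompact_compactCovering E n, ?_⟩
  rw [← withDensity_apply _ (hs_meas n)]
  exact hn.le
/-- (Lemma 6.9(ii): uniform tightness.)  Let `E` be a locally compact
Polish space, `λ` a σ-finite Borel measure on `E` finite on compacts,
`λ_T = (Lebesgue on [0,T]) ⊗ λ`, and let `d` be measurable, square integrable w.r.t.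
`λ_T`, and exponentially integrable on sets of finite `λ_T`-measure for every rate
`δ₃ > 0`.  Then for every `ε > 0` there is a compact `K_ε ⊆ E` such that
`sup_{ρ ∈ S̃^Υ} ∫₀ᵀ∫_{E∖K_ε} |d| |ρ − 1| dλ ds ≤ ε`. -/
theorem tightness_of_controls
    {E : Type*} [TopologicalSpace E] [PolishSpace E] [LocallyCompactSpace E]
    [MeasurableSpace E] [BorelSpace E]
    (lam : Measure E) [SigmaFinite lam] [IsFiniteMeasureOnCompacts lam]
    (T : ℝ) (hT : 0 < T) (Υ : ℝ) (hΥ : 0 < Υ)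
    (lamT : Measure (ℝ × E))
    (hlamT : lamT = (volume.restrict (Set.Icc (0:ℝ) T)).prod lam)
    (d : ℝ × E → ℝ) (hdmeas : Measurable d)
    (hdsq : Integrable (fun p => |d p| ^ 2) lamT)
    (hexp : ∀ δ₃ : ℝ, 0 < δ₃ → ∀ X : Set (ℝ × E), MeasurableSet X → lamT X < ⊤ →
      IntegrableOn (fun p => Real.exp (δ₃ * |d p|)) X lamT) :
    ∀ ε : ℝ, 0 < ε → ∃ K : Set E, IsCompact K ∧
      ∀ ρ : ℝ × E → ℝ, Measurable ρ → (∀ p, 0 ≤ ρ p) →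
        (∫⁻ p, ENNReal.ofReal (ρ p * Real.log (ρ p) - ρ p + 1) ∂lamT
          ≤ ENNReal.ofReal Υ) →
        ∫⁻ p in (Set.univ : Set ℝ) ×ˢ Kᶜ,
            ENNReal.ofReal (|d p| * |ρ p - 1|) ∂lamT ≤ ENNReal.ofReal ε := by
  intro ε hε
  set σ : ℝ := 2 * Υ / ε with hσdef
  have hσ : 0 < σ := by positivity
  set F : Set (ℝ × E) := {q | 1 ≤ |d q|} with hF
  have hFmeas : MeasurableSet F := measurableSet_le measurable_const hdmeas.abs
  have hd2lint : ∫⁻ p, ENNReal.ofReal (|d p| ^ 2) ∂lamT < ⊤ := hdsq.lintegral_lt_top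
  have hFfin : lamT F < ⊤ := by
    have hmeasf : AEMeasurable (fun p => ENNReal.ofReal (|d p| ^ 2)) lamT :=
      ((hdmeas.abs.pow_const 2).ennreal_ofReal).aemeasurable
    have h1 := mul_meas_ge_le_lintegral₀ hmeasf 1
    have hsub : F ⊆ {p | 1 ≤ ENNReal.ofReal (|d p| ^ 2)} := by
      intro p hp
      have h2 : (1 : ℝ) ≤ |d p| ^ 2 := by
        have : (1 : ℝ) ≤ |d p| := hp
        nlinarith
      simpa using ENNReal.one_le_ofReal.2 h2
    calc lamT F ≤ lamT {p | 1 ≤ ENNReal.ofReal (|d p| ^ 2)} := measure_mono hsub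
      _ ≤ ∫⁻ p, ENNReal.ofReal (|d p| ^ 2) ∂lamT := by simpa using h1
      _ < ⊤ := hd2lint
  have hexpInt : Integrable (F.indicator fun p => Real.exp (σ * |d p|)) lamT :=
    (hexp σ hσ F hFmeas hFfin).integrable_indicator hFmeas
  set g : ℝ × E → ℝ := fun p =>
    σ * Real.exp σ * |d p| ^ 2 + (F.indicator (fun q => Real.exp (σ * |d q|)) p) / σ with hg
  have hg_int : Integrable g lamT := (hdsq.const_mul _).add (hexpInt.div_const σ)
  obtain ⟨K, hK, htail⟩ := tail_small lamT g hg_int (half_pos hε)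
  refine ⟨K, hK, ?_⟩
  intro ρ hρmeas hρnn hρent
  have hpt : ∀ p, ENNReal.ofReal (|d p| * |ρ p - 1|) ≤
      ENNReal.ofReal ((1 / σ) * (ρ p * Real.log (ρ p) - ρ p + 1)) + ENNReal.ofReal (g p) := by
    intro p
    have hu : 0 ≤ |d p| := abs_nonneg _
    have hkey := key_ineq (σ * |d p|) (ρ p) (by positivity) (hρnn p)
    have h1 : |d p| * |ρ p - 1| ≤ (1 / σ) * (ρ p * Real.log (ρ p) - ρ p + 1)
        + (Real.exp (σ * |d p|) - 1 - σ * |d p|) / σ := by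
      have h2 : (σ * |d p| * |ρ p - 1|) / σ ≤
          ((ρ p * Real.log (ρ p) - ρ p + 1) + (Real.exp (σ * |d p|) - 1 - σ * |d p|)) / σ := by
        gcongr
      calc |d p| * |ρ p - 1| = (σ * |d p| * |ρ p - 1|) / σ := by field_simp
        _ ≤ _ := h2
        _ = (1 / σ) * (ρ p * Real.log (ρ p) - ρ p + 1)
            + (Real.exp (σ * |d p|) - 1 - σ * |d p|) / σ := by ring
    have h3 : (Real.exp (σ * |d p|) - 1 - σ * |d p|) / σ ≤ g p := by
      by_cases hp : p ∈ F
      · rw [hg]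
        simp only [Set.indicator_of_mem hp]
        have hnn : 0 ≤ σ * Real.exp σ * |d p| ^ 2 := by positivity
        have : Real.exp (σ * |d p|) - 1 - σ * |d p| ≤ Real.exp (σ * |d p|) := by
          nlinarith [mul_nonneg hσ.le hu]
        have hdiv : (Real.exp (σ * |d p|) - 1 - σ * |d p|) / σ
            ≤ Real.exp (σ * |d p|) / σ := by gcongr
        linarith
      · rw [hg]
        simp only [Set.indicator_of_notMem hp]
        have hu1 : |d p| < 1 := by
          by_contra hcon
          exact hp (le_of_not_gt hcon)
        have hx := exp_sub_one_sub_le (x := σ * |d p|) (by positivity)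
        have hxe : Real.exp (σ * |d p|) ≤ Real.exp σ :=
          Real.exp_le_exp.2 (by nlinarith)
        have hq : (σ * |d p|) ^ 2 * Real.exp (σ * |d p|) ≤ σ ^ 2 * |d p| ^ 2 * Real.exp σ := by
          have h0 : (σ * |d p|) ^ 2 = σ ^ 2 * |d p| ^ 2 := by ring
          rw [h0]
          exact mul_le_mul_of_nonneg_left hxe (by positivity)
        have hfin : Real.exp (σ * |d p|) - 1 - σ * |d p| ≤ σ ^ 2 * |d p| ^ 2 * Real.exp σ :=
          hx.trans hq
        rw [div_le_iff₀ hσ]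
        calc Real.exp (σ * |d p|) - 1 - σ * |d p| ≤ σ ^ 2 * |d p| ^ 2 * Real.exp σ := hfin
          _ = (σ * Real.exp σ * |d p| ^ 2 + 0 / σ) * σ := by field_simp; ring
    calc ENNReal.ofReal (|d p| * |ρ p - 1|)
        ≤ ENNReal.ofReal ((1 / σ) * (ρ p * Real.log (ρ p) - ρ p + 1) + g p) :=
          ENNReal.ofReal_le_ofReal (by linarith)
      _ ≤ _ := ENNReal.ofReal_add_le
  have hmeas1 : Measurable fun p =>
      ENNReal.ofReal ((1 / σ) * (ρ p * Real.log (ρ p) - ρ p + 1)) :=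
    (measurable_const.mul (((hρmeas.mul (Real.measurable_log.comp hρmeas)).sub hρmeas).add
      measurable_const)).ennreal_ofReal
  have hhalf : ENNReal.ofReal (1 / σ) * ENNReal.ofReal Υ = ENNReal.ofReal (ε / 2) := by
    rw [← ENNReal.ofReal_mul (by positivity)]
    congr 1
    rw [hσdef]
    field_simp
  calc ∫⁻ p in (Set.univ : Set ℝ) ×ˢ Kᶜ, ENNReal.ofReal (|d p| * |ρ p - 1|) ∂lamT
      ≤ ∫⁻ p in (Set.univ : Set ℝ) ×ˢ Kᶜ,
          (ENNReal.ofReal ((1 / σ) * (ρ p * Real.log (ρ p) - ρ p + 1))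
            + ENNReal.ofReal (g p)) ∂lamT := lintegral_mono hpt
    _ = (∫⁻ p in (Set.univ : Set ℝ) ×ˢ Kᶜ,
          ENNReal.ofReal ((1 / σ) * (ρ p * Real.log (ρ p) - ρ p + 1)) ∂lamT)
        + ∫⁻ p in (Set.univ : Set ℝ) ×ˢ Kᶜ, ENNReal.ofReal (g p) ∂lamT :=
          lintegral_add_left hmeas1 _
    _ ≤ ENNReal.ofReal (ε / 2) + ENNReal.ofReal (ε / 2) := by
        refine add_le_add ?_ htail
        have hsplit : ∀ p : ℝ × E, ENNReal.ofReal ((1 / σ) * (ρ p * Real.log (ρ p) - ρ p + 1))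
            = ENNReal.ofReal (1 / σ) * ENNReal.ofReal (ρ p * Real.log (ρ p) - ρ p + 1) :=
          fun p => ENNReal.ofReal_mul (by positivity)
        calc ∫⁻ p in (Set.univ : Set ℝ) ×ˢ Kᶜ,
              ENNReal.ofReal ((1 / σ) * (ρ p * Real.log (ρ p) - ρ p + 1)) ∂lamT
            = ∫⁻ p in (Set.univ : Set ℝ) ×ˢ Kᶜ, ENNReal.ofReal (1 / σ)
              * ENNReal.ofReal (ρ p * Real.log (ρ p) - ρ p + 1) ∂lamT := by
              simp_rw [hsplit]
          _ = ENNReal.ofReal (1 / σ) * ∫⁻ p in (Set.univ : Set ℝ) ×ˢ Kᶜ,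
              ENNReal.ofReal (ρ p * Real.log (ρ p) - ρ p + 1) ∂lamT :=
              lintegral_const_mul' _ _ ENNReal.ofReal_ne_top
          _ ≤ ENNReal.ofReal (1 / σ) * ∫⁻ p,
              ENNReal.ofReal (ρ p * Real.log (ρ p) - ρ p + 1) ∂lamT := by
              gcongr
              exact Measure.restrict_le_self
          _ ≤ ENNReal.ofReal (1 / σ) * ENNReal.ofReal Υ := by gcongr
          _ = ENNReal.ofReal (ε / 2) := hhalf
    _ = ENNReal.ofReal ε := by
        rw [← ENNReal.ofReal_add (by positivity) (by positivity)]
        norm_num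
end
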